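/- Sound and strong completeness with respect to correspondence conditions: let Ax ⊆ {N_◇, C_◇, I_◇□} and let F be the class of all CK-frames satisfying the correspondence condition (A-corr) for each A ∈ Ax, where (Nd-corr) is: for all x, if yRe for all y ≥ x then x = e; (Cd-corr) is: for all x, y, z with y, z not R-related to e and x ≤ y, x ≤ z, there exists w ≥ x with R[w] ⊆ ↓R[y] and R[w] ⊆ ↓R[z]; and (Idb-corr) is: for all x, y, z with xRy ≤ z ≠ e, there exist u, w with x ≤ u, uRw, w ≤ z, and every s ≥ u satisfies sRe or has some t with sRt and z ≤ t. Then for every set Γ of formulas and every formula φ, Γ semantically entails φ on F if and only if Γ ⊢_Ax φ. -/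

import Mathlib

/-- Formulas of the modal language L. -/
inductive Form : Type
  | var : ℕ → Form
  | bot : Form
  | and : Form → Form → Form
  | or : Form → Form → Form
  | imp : Form → Form → Form
  | box : Form → Form
  | dia : Form → Form

namespace Form

/-- Negation abbreviation: ¬φ := φ → ⊥. -/
def neg (φ : Form) : Form := φ.imp bot

/-- Uniform substitution. -/
def subst (σ : ℕ → Form) : Form → Form
  | var p => σ p
  | bot => bot
  | and a b => and (a.subst σ) (b.subst σ)
  | or a b => or (a.subst σ) (b.subst σ)
  | imp a b => imp (a.subst σ) (b.subst σ)
  | box a => box (a.subst σ)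
  | dia a => dia (a.subst σ)

end Form

/-- Substitution instances of the axioms of a standard Hilbert axiomatisation
of intuitionistic propositional logic (the axioms are schematic, so all
substitution instances are included). -/
inductive IPLAx : Form → Prop
  | a1 (φ ψ : Form) : IPLAx (φ.imp (ψ.imp φ))
  | a2 (φ ψ χ : Form) : IPLAx ((φ.imp (ψ.imp χ)).imp ((φ.imp ψ).imp (φ.imp χ)))
  | a3 (φ ψ : Form) : IPLAx ((φ.and ψ).imp φ)
  | a4 (φ ψ : Form) : IPLAx ((φ.and ψ).imp ψ)
  | a5 (φ ψ : Form) : IPLAx (φ.imp (ψ.imp (φ.and ψ)))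
  | a6 (φ ψ : Form) : IPLAx (φ.imp (φ.or ψ))
  | a7 (φ ψ : Form) : IPLAx (ψ.imp (φ.or ψ))
  | a8 (φ ψ χ : Form) : IPLAx ((φ.imp χ).imp ((ψ.imp χ).imp ((φ.or ψ).imp χ)))
  | a9 (φ : Form) : IPLAx (Form.bot.imp φ)

/-- Substitution instances of K_□ : □(φ→ψ) → (□φ → □ψ). -/
def KBoxAx (χ : Form) : Prop :=
  ∃ φ ψ : Form, χ = ((φ.imp ψ).box).imp ((φ.box).imp (ψ.box))

/-- Substitution instances of K_◇ : □(φ→ψ) → (◇φ → ◇ψ). -/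
def KDiaAx (χ : Form) : Prop :=
  ∃ φ ψ : Form, χ = ((φ.imp ψ).box).imp ((φ.dia).imp (ψ.dia))

/-- Axiom instances available in the calculus CK ⊕ Ax : instances of IPL
axioms, of K_□, of K_◇, or substitution instances of members of Ax. -/
def AxInst (Ax : Set Form) (φ : Form) : Prop :=
  IPLAx φ ∨ KBoxAx φ ∨ KDiaAx φ ∨ ∃ ψ ∈ Ax, ∃ σ : ℕ → Form, φ = ψ.subst σ

/-- The generalised Hilbert calculus CK ⊕ Ax deriving consecutions Γ ⊢_Ax φ:
rules (Ax), (MP), (Nec) and (El). -/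
inductive Prv (Ax : Set Form) : Set Form → Form → Prop
  | ax {Γ : Set Form} {φ : Form} : AxInst Ax φ → Prv Ax Γ φ
  | mp {Γ : Set Form} {φ ψ : Form} : Prv Ax Γ φ → Prv Ax Γ (φ.imp ψ) → Prv Ax Γ ψ
  | nec {Γ : Set Form} {φ : Form} : Prv Ax ∅ φ → Prv Ax Γ φ.box
  | el {Γ : Set Form} {φ : Form} : φ ∈ Γ → Prv Ax Γ φ

/-- A CK-frame (X, e, ≤, R): ≤ is a preorder, e is ≤-maximal (an "exploding"
world), and e R x iff x = e. -/
structure CKFrame where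
  W : Type
  le : W → W → Prop
  R : W → W → Prop
  e : W
  le_refl : ∀ x : W, le x x
  le_trans : ∀ {x y z : W}, le x y → le y z → le x z
  e_max : ∀ {x : W}, le e x → x = e
  e_R : ∀ x : W, R e x ↔ x = e

/-- A valuation on a CK-frame: each variable gets a ≤-upset containing e. -/
structure Val (F : CKFrame) where
  V : ℕ → F.W → Prop
  mono : ∀ (p : ℕ) {x y : F.W}, F.le x y → V p x → V p y
  at_e : ∀ p : ℕ, V p F.e

/-- The forcing relation M, x ⊩ φ of a CK-model (F, V). -/
def Forces (F : CKFrame) (V : Val F) : Form → F.W → Prop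
  | .var p, x => V.V p x
  | .bot, x => x = F.e
  | .and a b, x => Forces F V a x ∧ Forces F V b x
  | .or a b, x => Forces F V a x ∨ Forces F V b x
  | .imp a b, x => ∀ y : F.W, F.le x y → Forces F V a y → Forces F V b y
  | .box a, x => ∀ y z : F.W, F.le x y → F.R y z → Forces F V a z
  | .dia a, x => ∀ y : F.W, F.le x y → ∃ z : F.W, F.R y z ∧ Forces F V a z

/-- A frame validates the consecution Γ ⊢ φ if in every model on it, every
world forcing all of Γ forces φ. -/
def ValidConseq (F : CKFrame) (Γ : Set Form) (φ : Form) : Prop :=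
  ∀ (V : Val F) (x : F.W), (∀ ψ ∈ Γ, Forces F V ψ x) → Forces F V φ x

/-- A frame validates a formula φ if every world in every model on it forces φ. -/
def ValidForm (F : CKFrame) (φ : Form) : Prop :=
  ∀ (V : Val F) (x : F.W), Forces F V φ x

/-- Γ semantically entails φ on a class 𝓕 of CK-frames. -/
def SemEntails (𝓕 : Set CKFrame) (Γ : Set Form) (φ : Form) : Prop :=
  ∀ F ∈ 𝓕, ValidConseq F Γ φ

/-- The axiom N_◇ : ◇⊥ → ⊥. -/
def NdAx : Form := (Form.bot.dia).imp Form.bot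

/-- The axiom N_◇□ : ◇⊥ → □⊥. -/
def NdbAx : Form := (Form.bot.dia).imp (Form.bot.box)

/-- The axiom C_◇ : ◇(p ∨ q) → ◇p ∨ ◇q. -/
def CdAx : Form :=
  (((Form.var 0).or (Form.var 1)).dia).imp (((Form.var 0).dia).or ((Form.var 1).dia))

/-- The axiom I_◇□ : (◇p → □q) → □(p → q). -/
def IdbAx : Form :=
  (((Form.var 0).dia).imp ((Form.var 1).box)).imp (((Form.var 0).imp (Form.var 1)).box)

/-- (Nd-corr): for all x, if yRe for all y ≥ x, then x = e. -/
def NdCorr (F : CKFrame) : Prop :=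
  ∀ x : F.W, (∀ y : F.W, F.le x y → F.R y F.e) → x = F.e

/-- (Cd-corr). -/
def CdCorr (F : CKFrame) : Prop :=
  ∀ x y z : F.W, ¬ F.R y F.e → ¬ F.R z F.e → F.le x y → F.le x z →
    ∃ w : F.W, F.le x w ∧
      (∀ v : F.W, F.R w v → ∃ u : F.W, F.R y u ∧ F.le v u) ∧
      (∀ v : F.W, F.R w v → ∃ u : F.W, F.R z u ∧ F.le v u)

/-- (Idb-corr). -/
def IdbCorr (F : CKFrame) : Prop :=
  ∀ x y z : F.W, F.R x y → F.le y z → z ≠ F.e →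
    ∃ u w : F.W, F.le x u ∧ F.R u w ∧ F.le w z ∧
      ∀ s : F.W, F.le u s → F.R s F.e ∨ ∃ t : F.W, F.R s t ∧ F.le z t

/-! ### Auxiliary material for the proof -/

namespace CKAux

open Form

variable {Ax : Set Form}

theorem prv_mono {Γ Δ : Set Form} {φ : Form} (h : Prv Ax Γ φ) (hs : Γ ⊆ Δ) :
    Prv Ax Δ φ := by
  induction h generalizing Δ with
  | ax h => exact .ax h
  | mp _ _ ih1 ih2 => exact .mp (ih1 hs) (ih2 hs)
  | nec h => exact .nec h
  | el h => exact .el (hs h)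

theorem prv_cut {Γ Δ : Set Form} {φ : Form} (h : Prv Ax Γ φ)
    (hs : ∀ γ ∈ Γ, Prv Ax Δ γ) : Prv Ax Δ φ := by
  induction h generalizing Δ with
  | ax h => exact .ax h
  | mp _ _ ih1 ih2 => exact .mp (ih1 hs) (ih2 hs)
  | nec h => exact .nec h
  | el h => exact hs _ h

theorem prv_a1 {Γ : Set Form} (φ ψ : Form) : Prv Ax Γ (φ.imp (ψ.imp φ)) :=
  .ax (Or.inl (.a1 φ ψ))
theorem prv_a2 {Γ : Set Form} (φ ψ χ : Form) :
    Prv Ax Γ ((φ.imp (ψ.imp χ)).imp ((φ.imp ψ).imp (φ.imp χ))) :=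
  .ax (Or.inl (.a2 φ ψ χ))
theorem prv_a3 {Γ : Set Form} (φ ψ : Form) : Prv Ax Γ ((φ.and ψ).imp φ) :=
  .ax (Or.inl (.a3 φ ψ))
theorem prv_a4 {Γ : Set Form} (φ ψ : Form) : Prv Ax Γ ((φ.and ψ).imp ψ) :=
  .ax (Or.inl (.a4 φ ψ))
theorem prv_a5 {Γ : Set Form} (φ ψ : Form) : Prv Ax Γ (φ.imp (ψ.imp (φ.and ψ))) :=
  .ax (Or.inl (.a5 φ ψ))
theorem prv_a6 {Γ : Set Form} (φ ψ : Form) : Prv Ax Γ (φ.imp (φ.or ψ)) :=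
  .ax (Or.inl (.a6 φ ψ))
theorem prv_a7 {Γ : Set Form} (φ ψ : Form) : Prv Ax Γ (ψ.imp (φ.or ψ)) :=
  .ax (Or.inl (.a7 φ ψ))
theorem prv_a8 {Γ : Set Form} (φ ψ χ : Form) :
    Prv Ax Γ ((φ.imp χ).imp ((ψ.imp χ).imp ((φ.or ψ).imp χ))) :=
  .ax (Or.inl (.a8 φ ψ χ))
theorem prv_a9 {Γ : Set Form} (φ : Form) : Prv Ax Γ (Form.bot.imp φ) :=
  .ax (Or.inl (.a9 φ))
theorem prv_kbox {Γ : Set Form} (φ ψ : Form) :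
    Prv Ax Γ (((φ.imp ψ).box).imp ((φ.box).imp (ψ.box))) :=
  .ax (Or.inr (Or.inl ⟨φ, ψ, rfl⟩))
theorem prv_kdia {Γ : Set Form} (φ ψ : Form) :
    Prv Ax Γ (((φ.imp ψ).box).imp ((φ.dia).imp (ψ.dia))) :=
  .ax (Or.inr (Or.inr (Or.inl ⟨φ, ψ, rfl⟩)))

theorem prv_imp_self {Γ : Set Form} (φ : Form) : Prv Ax Γ (φ.imp φ) :=
  .mp (prv_a1 φ φ) (.mp (prv_a1 φ (φ.imp φ)) (prv_a2 φ (φ.imp φ) φ))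

theorem prv_deduction {Γ : Set Form} {φ ψ : Form} (h : Prv Ax (insert φ Γ) ψ) :
    Prv Ax Γ (φ.imp ψ) := by
  generalize hΔ : insert φ Γ = Δ at h
  induction h generalizing Γ with
  | ax h => exact .mp (.ax h) (prv_a1 _ _)
  | @mp _ α β _ _ ih1 ih2 =>
      exact .mp (ih1 hΔ) (.mp (ih2 hΔ) (prv_a2 φ α β))
  | nec h => exact .mp (.nec h) (prv_a1 _ _)
  | el h =>
      subst hΔ
      rcases h with h | h
      · subst h; exact prv_imp_self _
      · exact .mp (.el h) (prv_a1 _ _)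

theorem prv_and_intro {Γ : Set Form} {φ ψ : Form} (h1 : Prv Ax Γ φ)
    (h2 : Prv Ax Γ ψ) : Prv Ax Γ (φ.and ψ) :=
  .mp h2 (.mp h1 (prv_a5 φ ψ))

theorem prv_or_elim {Γ : Set Form} {φ ψ χ : Form} (h : Prv Ax Γ (φ.or ψ))
    (h1 : Prv Ax (insert φ Γ) χ) (h2 : Prv Ax (insert ψ Γ) χ) : Prv Ax Γ χ :=
  .mp h (.mp (prv_deduction h2) (.mp (prv_deduction h1) (prv_a8 φ ψ χ)))

theorem prv_finite {Γ : Set Form} {φ : Form} (h : Prv Ax Γ φ) :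
    ∃ S : Set Form, S ⊆ Γ ∧ S.Finite ∧ Prv Ax S φ := by
  induction h with
  | ax h => exact ⟨∅, by simp, Set.finite_empty, .ax h⟩
  | mp _ _ ih1 ih2 =>
      obtain ⟨S1, hS1, f1, p1⟩ := ih1
      obtain ⟨S2, hS2, f2, p2⟩ := ih2
      exact ⟨S1 ∪ S2, Set.union_subset hS1 hS2, f1.union f2,
        .mp (prv_mono p1 Set.subset_union_left) (prv_mono p2 Set.subset_union_right)⟩
  | nec h => exact ⟨∅, by simp, Set.finite_empty, .nec h⟩
  | @el _ ψ h => exact ⟨{ψ}, Set.singleton_subset_iff.2 h, Set.finite_singleton _, .el rfl⟩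

/-- A theory: a deductively closed set. -/
def IsTheory (Ax : Set Form) (T : Set Form) : Prop := ∀ φ, Prv Ax T φ → φ ∈ T

/-- A prime theory. -/
def IsPrime (Ax : Set Form) (T : Set Form) : Prop :=
  IsTheory Ax T ∧ ∀ α β, α.or β ∈ T → α ∈ T ∨ β ∈ T

theorem univ_prime : IsPrime Ax (Set.univ) :=
  ⟨fun _ _ => trivial, fun α _ _ => Or.inl trivial⟩

theorem theory_univ_of_bot {T : Set Form} (hT : IsTheory Ax T)
    (hb : Form.bot ∈ T) : T = Set.univ := by
  ext ψ; simp only [Set.mem_univ, iff_true]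
  exact hT ψ (.mp (.el hb) (prv_a9 ψ))

theorem chain_finite_subset {c : Set (Set Form)} (hc : IsChain (· ⊆ ·) c)
    (hne : c.Nonempty) {S : Set Form} (hfin : S.Finite) (hS : S ⊆ ⋃₀ c) :
    ∃ t ∈ c, S ⊆ t := by
  revert hS
  refine Set.Finite.induction_on S hfin (fun _ => ⟨hne.choose, hne.choose_spec, by simp⟩) ?_
  · intro a S ha hfinS ih hS
    obtain ⟨t, htc, hts⟩ := ih (Set.Subset.trans (Set.subset_insert a S) hS)
    obtain ⟨u, huc, hau⟩ := hS (Set.mem_insert a S)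
    rcases hc.total htc huc with h | h
    · exact ⟨u, huc, Set.insert_subset hau (hts.trans h)⟩
    · exact ⟨t, htc, Set.insert_subset (h hau) hts⟩

theorem lindenbaum {Γ : Set Form} {φ : Form} (h : ¬ Prv Ax Γ φ) :
    ∃ T : Set Form, Γ ⊆ T ∧ IsPrime Ax T ∧ φ ∉ T := by
  obtain ⟨M, hΓM, hM⟩ := zorn_subset_nonempty {T : Set Form | Γ ⊆ T ∧ ¬ Prv Ax T φ}
    (fun c hcS hc hne => by
      refine ⟨⋃₀ c, ⟨?_, ?_⟩, fun s hs => Set.subset_sUnion_of_mem hs⟩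
      · obtain ⟨t, ht⟩ := hne
        exact (hcS ht).1.trans (Set.subset_sUnion_of_mem ht)
      · intro hp
        obtain ⟨S, hSsub, hSfin, hSp⟩ := prv_finite hp
        obtain ⟨t, htc, hSt⟩ := chain_finite_subset hc hne hSfin hSsub
        exact (hcS htc).2 (prv_mono hSp hSt))
    Γ ⟨subset_rfl, h⟩
  obtain ⟨⟨hΓ, hnp⟩, hmax⟩ := hM
  have hthy : IsTheory Ax M := by
    intro ψ hψ
    by_contra hne
    have : insert ψ M ∈ {T : Set Form | Γ ⊆ T ∧ ¬ Prv Ax T φ} → insert ψ M ⊆ M :=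
      fun hmem => hmax hmem (Set.subset_insert ψ M)
    have hni : ¬ (Γ ⊆ insert ψ M ∧ ¬ Prv Ax (insert ψ M) φ) := by
      intro hmem
      exact hne (this hmem (Set.mem_insert ψ M))
    push_neg at hni
    have hp := hni (hΓ.trans (Set.subset_insert ψ M))
    exact hnp (prv_cut hp (fun γ hγ => by
      rcases hγ with hγ | hγ
      · subst hγ; exact hψ
      · exact .el hγ))
  refine ⟨M, hΓ, ⟨hthy, ?_⟩, fun hφ => hnp (.el hφ)⟩
  intro α β hor
  by_contra hne
  push_neg at hne
  obtain ⟨hα, hβ⟩ := hne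
  have key : ∀ γ : Form, γ ∉ M → Prv Ax (insert γ M) φ := by
    intro γ hγ
    by_contra hp
    have hmem : insert γ M ∈ {T : Set Form | Γ ⊆ T ∧ ¬ Prv Ax T φ} :=
      ⟨hΓ.trans (Set.subset_insert γ M), hp⟩
    exact hγ (hmax hmem (Set.subset_insert γ M) (Set.mem_insert γ M))
  exact hnp (prv_or_elim (.el hor) (key α hα) (key β hβ))

/-- The set of formulas ψ with □ψ ∈ T. -/
def bx (T : Set Form) : Set Form := {ψ | ψ.box ∈ T}

theorem box_closed {y : Set Form} (hy : IsTheory Ax y) {χ : Form}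
    (h : Prv Ax (bx y) χ) : χ.box ∈ y := by
  obtain ⟨S, hSsub, hSfin, hSp⟩ := prv_finite h
  have main : ∀ S : Set Form, S.Finite → ∀ χ, Prv Ax S χ → S ⊆ bx y → χ.box ∈ y := by
    intro S hfin
    refine Set.Finite.induction_on S hfin ?_ ?_
    · intro χ hp _
      exact hy _ (Prv.nec hp)
    · intro s S hs hfinS ih χ hp hsub
      have h1 : (s.imp χ).box ∈ y :=
        ih _ (prv_deduction hp) ((Set.subset_insert s S).trans hsub)
      exact hy _ (.mp (.el (hsub (Set.mem_insert s S)))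
        (.mp (.el h1) (prv_kbox s χ)))
  exact main S hSfin χ hSp hSsub

theorem dia_closed {y : Set Form} (hy : IsTheory Ax y) {θ χ : Form}
    (h : Prv Ax (insert θ (bx y)) χ) (hθ : θ.dia ∈ y) : χ.dia ∈ y := by
  have h1 : (θ.imp χ).box ∈ y := box_closed hy (prv_deduction h)
  exact hy _ (.mp (.el hθ) (.mp (.el h1) (prv_kdia θ χ)))

theorem exists_conj {g : Set Form} (hg : IsTheory Ax g) {S : Set Form}
    (hfin : S.Finite) (hS : S ⊆ g) : ∃ θ ∈ g, ∀ ψ ∈ S, Prv Ax {θ} ψ := by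
  revert hS
  refine Set.Finite.induction_on S hfin ?_ ?_
  · exact fun _ => ⟨Form.bot.imp Form.bot, hg _ (prv_imp_self _), by simp⟩
  · intro s S hs hfinS ih hsub
    obtain ⟨θ, hθg, hθ⟩ := ih ((Set.subset_insert s S).trans hsub)
    refine ⟨θ.and s, hg _ (prv_and_intro (.el hθg) (.el (hsub (Set.mem_insert s S)))), ?_⟩
    intro ψ hψ
    rcases hψ with rfl | hψ
    · exact .mp (.el rfl) (prv_a4 θ ψ)
    · refine prv_cut (hθ ψ hψ) (fun γ hγ => ?_)
      rcases hγ with rfl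
      exact .mp (.el rfl) (prv_a3 γ s)

theorem dia_set_closed {y g : Set Form} (hy : IsTheory Ax y) (hg : IsTheory Ax g)
    (hgd : ∀ ψ ∈ g, ψ.dia ∈ y) {χ : Form} (h : Prv Ax (g ∪ bx y) χ) :
    χ.dia ∈ y := by
  classical
  obtain ⟨S, hSsub, hSfin, hSp⟩ := prv_finite h
  have hfin1 : {s ∈ S | s ∈ g}.Finite := hSfin.subset (Set.sep_subset _ _)
  obtain ⟨θ, hθg, hθ⟩ := exists_conj hg hfin1 (fun s hs => hs.2)
  have hp2 : Prv Ax (insert θ (bx y)) χ := by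
    refine prv_cut hSp (fun s hs => ?_)
    by_cases hsg : s ∈ g
    · exact prv_mono (hθ s ⟨hs, hsg⟩) (by rintro u rfl; exact Set.mem_insert _ _)
    · rcases hSsub hs with h1 | h1
      · exact absurd h1 hsg
      · exact .el (Set.mem_insert_of_mem θ h1)
  exact dia_closed hy hp2 (hgd θ hθg)

/-- An injective coding of formulas into ℕ. -/
def fcode : Form → ℕ
  | .var p => Nat.pair 0 p
  | .bot => Nat.pair 1 0
  | .and a b => Nat.pair 2 (Nat.pair (fcode a) (fcode b))
  | .or a b => Nat.pair 3 (Nat.pair (fcode a) (fcode b))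
  | .imp a b => Nat.pair 4 (Nat.pair (fcode a) (fcode b))
  | .box a => Nat.pair 5 (fcode a)
  | .dia a => Nat.pair 6 (fcode a)

theorem fcode_inj : ∀ a b : Form, fcode a = fcode b → a = b := by
  intro a
  induction a with
  | var p =>
      intro b; cases b <;> intro h <;>
        simp only [fcode, Nat.pair_eq_pair] at h <;>
        first | exact absurd h.1 (by omega) | rw [h.2]
  | bot =>
      intro b; cases b <;> intro h <;>
        simp only [fcode, Nat.pair_eq_pair] at h <;>
        first | exact absurd h.1 (by omega) | rfl
  | and a1 a2 ih1 ih2 =>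
      intro b; cases b <;> intro h <;>
        simp only [fcode, Nat.pair_eq_pair] at h <;>
        first | exact absurd h.1 (by omega) | rw [ih1 _ h.2.1, ih2 _ h.2.2]
  | or a1 a2 ih1 ih2 =>
      intro b; cases b <;> intro h <;>
        simp only [fcode, Nat.pair_eq_pair] at h <;>
        first | exact absurd h.1 (by omega) | rw [ih1 _ h.2.1, ih2 _ h.2.2]
  | imp a1 a2 ih1 ih2 =>
      intro b; cases b <;> intro h <;>
        simp only [fcode, Nat.pair_eq_pair] at h <;>
        first | exact absurd h.1 (by omega) | rw [ih1 _ h.2.1, ih2 _ h.2.2]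
  | box a1 ih =>
      intro b; cases b <;> intro h <;>
        simp only [fcode, Nat.pair_eq_pair] at h <;>
        first | exact absurd h.1 (by omega) | rw [ih _ h.2]
  | dia a1 ih =>
      intro b; cases b <;> intro h <;>
        simp only [fcode, Nat.pair_eq_pair] at h <;>
        first | exact absurd h.1 (by omega) | rw [ih _ h.2]

/-- A partial decoding of naturals into formulas. -/
noncomputable def fdec (n : ℕ) : Option Form := by
  classical exact if h : ∃ φ : Form, fcode φ = n then some h.choose else none

theorem fdec_fcode (φ : Form) : fdec (fcode φ) = some φ := by
  have h : ∃ ψ : Form, fcode ψ = fcode φ := ⟨φ, rfl⟩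
  rw [fdec, dif_pos h]
  exact congrArg some (fcode_inj _ _ h.choose_spec)

open scoped Classical in
/-- One step of the prime-extension chain used for the C_◇ existence lemma. -/
noncomputable def stepf (Ax : Set Form) (x B : Set Form) (n : ℕ) (χ : Form) : Form :=
  match fdec (Nat.unpair n).1 with
  | some (Form.or α β) =>
      if Prv Ax (insert χ B) (α.or β) then
        (if ∀ γ : Form, Prv Ax (insert (χ.and α) B) γ → γ.dia ∈ x then χ.and α
         else χ.and β)
      else χ
  | _ => χ

/-- The chain of conjunctions for the C_◇ existence lemma. -/
noncomputable def chainf (Ax : Set Form) (x B : Set Form) : ℕ → Form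
  | 0 => Form.bot.imp Form.bot
  | n + 1 => stepf Ax x B n (chainf Ax x B n)

theorem stepf_prv (x B : Set Form) (n : ℕ) (χ : Form) :
    Prv Ax (insert (stepf Ax x B n χ) B) χ := by
  unfold stepf
  split
  · split_ifs with h1 h2
    · exact .mp (.el (Set.mem_insert _ _)) (prv_a3 _ _)
    · exact .mp (.el (Set.mem_insert _ _)) (prv_a3 _ _)
    · exact .el (Set.mem_insert _ _)
  · exact .el (Set.mem_insert _ _)

theorem chainf_mono {x B : Set Form} {m n : ℕ} (h : m ≤ n) :
    Prv Ax (insert (chainf Ax x B n) B) (chainf Ax x B m) := by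
  induction n with
  | zero =>
      rw [Nat.le_zero] at h; subst h
      exact .el (Set.mem_insert _ _)
  | succ n ih =>
      by_cases h1 : m = n + 1
      · subst h1; exact .el (Set.mem_insert _ _)
      · have hmn := ih (by omega)
        refine prv_cut hmn (fun γ hγ => ?_)
        rcases hγ with rfl | hγ
        · exact stepf_prv x B n _
        · exact .el (Set.mem_insert_of_mem _ hγ)

theorem chainf_inv (hCd : CdAx ∈ Ax) {x B : Set Form} (hx : IsPrime Ax x)
    (H : ∀ γ, Prv Ax B γ → γ.dia ∈ x) :
    ∀ n γ, Prv Ax (insert (chainf Ax x B n) B) γ → γ.dia ∈ x := by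
  have key : ∀ (χ α β : Form),
      (∀ γ, Prv Ax (insert χ B) γ → γ.dia ∈ x) →
      Prv Ax (insert χ B) (α.or β) →
      ¬ (∀ γ, Prv Ax (insert (χ.and α) B) γ → γ.dia ∈ x) →
      ∀ γ, Prv Ax (insert (χ.and β) B) γ → γ.dia ∈ x := by
    intro χ α β hinv hor hbad
    by_contra hb
    push_neg at hb hbad
    obtain ⟨γa, hpa, hda⟩ := hbad
    obtain ⟨γb, hpb, hdb⟩ := hb
    have transfer : ∀ δ γ : Form, Prv Ax (insert (χ.and δ) B) γ →
        Prv Ax (insert δ (insert χ B)) γ := by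
      intro δ γ hp
      refine prv_cut hp (fun s hs => ?_)
      rcases hs with rfl | hs
      · exact prv_and_intro (.el (Set.mem_insert_of_mem _ (Set.mem_insert _ _)))
          (.el (Set.mem_insert _ _))
      · exact .el (Set.mem_insert_of_mem _ (Set.mem_insert_of_mem _ hs))
    have ha' : Prv Ax (insert α (insert χ B)) (γa.or γb) :=
      .mp (transfer α γa hpa) (prv_a6 _ _)
    have hb' : Prv Ax (insert β (insert χ B)) (γa.or γb) :=
      .mp (transfer β γb hpb) (prv_a7 _ _)
    have hor2 : Prv Ax (insert χ B) (γa.or γb) := prv_or_elim hor ha' hb'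
    have hdor : (γa.or γb).dia ∈ x := hinv _ hor2
    have hcd : Prv Ax x (((γa.or γb).dia).imp ((γa.dia).or (γb.dia))) :=
      .ax (Or.inr (Or.inr (Or.inr ⟨CdAx, hCd,
        (fun n => if n = 0 then γa else γb), rfl⟩)))
    have hx2 : (γa.dia).or (γb.dia) ∈ x := hx.1 _ (.mp (.el hdor) hcd)
    rcases hx.2 _ _ hx2 with h | h
    exacts [hda h, hdb h]
  intro n
  induction n with
  | zero =>
      intro γ hγ
      refine H γ (prv_cut hγ (fun s hs => ?_))
      rcases hs with rfl | hs
      · exact prv_imp_self _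
      · exact .el hs
  | succ n ih =>
      show ∀ γ, Prv Ax (insert (stepf Ax x B n (chainf Ax x B n)) B) γ → γ.dia ∈ x
      unfold stepf
      split
      · next α β _ =>
          split_ifs with h1 h2
          · exact h2
          · exact key _ α β ih h1 h2
          · exact ih
      · exact ih

theorem chainf_split {x B : Set Form} {n : ℕ} {α β : Form}
    (hfd : fdec (Nat.unpair n).1 = some (α.or β))
    (hp : Prv Ax (insert (chainf Ax x B n) B) (α.or β)) :
    chainf Ax x B (n + 1) = (chainf Ax x B n).and α ∨
    chainf Ax x B (n + 1) = (chainf Ax x B n).and β := by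
  show stepf Ax x B n (chainf Ax x B n) = _ ∨ stepf Ax x B n (chainf Ax x B n) = _
  unfold stepf
  rw [hfd]
  split
  · next α' β' heq =>
      have h2 := Option.some.inj heq
      injection h2 with e1 e2
      subst e1; subst e2
      rw [if_pos hp]
      split_ifs
      · exact Or.inl rfl
      · exact Or.inr rfl
  · next h => exact (h α β rfl).elim

/-- The C_◇ existence lemma: any set B all of whose consequences are
◇-members of the prime theory x extends to a prime theory all of whose
members are ◇-members of x. -/
theorem lemmaB (hCd : CdAx ∈ Ax) {x B : Set Form} (hx : IsPrime Ax x)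
    (H : ∀ γ, Prv Ax B γ → γ.dia ∈ x) :
    ∃ u : Set Form, IsPrime Ax u ∧ B ⊆ u ∧ ∀ ψ ∈ u, ψ.dia ∈ x := by
  classical
  have inv := chainf_inv hCd hx H
  set u : Set Form := {ψ : Form | ∃ n, Prv Ax (insert (chainf Ax x B n) B) ψ} with hu
  have hmem : ∀ {ψ m n}, m ≤ n → Prv Ax (insert (chainf Ax x B m) B) ψ →
      Prv Ax (insert (chainf Ax x B n) B) ψ := by
    intro ψ m n hmn hp
    refine prv_cut hp (fun γ hγ => ?_)
    rcases hγ with rfl | hγ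
    · exact chainf_mono hmn
    · exact .el (Set.mem_insert_of_mem _ hγ)
  have hthy : IsTheory Ax u := by
    intro ψ hp
    obtain ⟨S, hSsub, hSfin, hSp⟩ := prv_finite hp
    have hN : ∃ N, ∀ s ∈ S, Prv Ax (insert (chainf Ax x B N) B) s := by
      revert hSsub
      refine Set.Finite.induction_on S hSfin ?_ ?_
      · exact fun _ => ⟨0, by simp⟩
      · intro a S ha hfinS ih hsub
        obtain ⟨N, hNs⟩ := ih ((Set.subset_insert a S).trans hsub)
        obtain ⟨M, hM⟩ := hsub (Set.mem_insert a S)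
        refine ⟨max N M, fun s hs => ?_⟩
        rcases hs with rfl | hs
        · exact hmem (le_max_right N M) hM
        · exact hmem (le_max_left N M) (hNs s hs)
    obtain ⟨N, hNs⟩ := hN
    exact ⟨N, prv_cut hSp hNs⟩
  refine ⟨u, ⟨hthy, ?_⟩, fun ψ h => ⟨0, .el (Set.mem_insert_of_mem _ h)⟩,
    fun ψ hψ => by obtain ⟨n, hn⟩ := hψ; exact inv n ψ hn⟩
  rintro α β ⟨m, hm⟩
  set n := Nat.pair (fcode (α.or β)) m with hn
  have hmn : m ≤ n := Nat.right_le_pair _ _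
  have hfd : fdec (Nat.unpair n).1 = some (α.or β) := by
    rw [hn, Nat.unpair_pair]
    exact fdec_fcode _
  have hor : Prv Ax (insert (chainf Ax x B n) B) (α.or β) := hmem hmn hm
  rcases chainf_split hfd hor with h | h
  · refine Or.inl ⟨n + 1, ?_⟩
    rw [h]
    exact .mp (.el (Set.mem_insert _ _)) (prv_a4 _ _)
  · refine Or.inr ⟨n + 1, ?_⟩
    rw [h]
    exact .mp (.el (Set.mem_insert _ _)) (prv_a4 _ _)

theorem prv_singleton_imp {θ φ : Form} (h : Prv Ax {θ} φ) : Prv Ax ∅ (θ.imp φ) :=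
  prv_deduction (prv_mono h (by rintro x rfl; exact Set.mem_insert _ _))

/-- The I_◇□ extension lemma: a world with an R-successor below the prime
theory c extends to a prime theory containing ◇c whose box-inverse stays
inside c. -/
theorem idb_ext (hIdb : IdbAx ∈ Ax) {a c : Set Form} (ha : IsTheory Ax a)
    (hc : IsPrime Ax c) (hbc : ∀ θ, θ.box ∈ a → θ ∈ c) :
    ∃ a' : Set Form, IsPrime Ax a' ∧ a ⊆ a' ∧ (∀ φ ∈ c, φ.dia ∈ a') ∧
      ∀ θ, θ.box ∈ a' → θ ∈ c := by
  classical
  have hbase : ∀ ψ, Prv Ax (a ∪ Form.dia '' c) (ψ.box) → ψ ∈ c := by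
    intro ψ hp
    obtain ⟨S, hSsub, hSfin, hSp⟩ := prv_finite hp
    have hGfin : {φ | φ ∈ c ∧ φ.dia ∈ S}.Finite := by
      have hsub : {φ | φ ∈ c ∧ φ.dia ∈ S} ⊆ Form.dia ⁻¹' S := fun φ hφ => hφ.2
      exact (hSfin.preimage
        (Set.injOn_of_injective (fun x y h => by injection h))).subset hsub
    obtain ⟨θ, hθc, hθ⟩ := exists_conj hc.1 hGfin (fun φ hφ => hφ.1)
    have h2 : Prv Ax (insert (θ.dia) a) (ψ.box) := by
      refine prv_cut hSp (fun s hs => ?_)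
      by_cases hsa : s ∈ a
      · exact .el (Set.mem_insert_of_mem _ hsa)
      · rcases hSsub hs with h1 | h1
        · exact absurd h1 hsa
        · obtain ⟨φ, hφc, rfl⟩ := h1
          have hG : φ ∈ {φ | φ ∈ c ∧ φ.dia ∈ S} := ⟨hφc, hs⟩
          have hbox : Prv Ax (insert (θ.dia) a) ((θ.imp φ).box) :=
            .nec (prv_singleton_imp (hθ φ hG))
          exact .mp (.el (Set.mem_insert _ _)) (.mp hbox (prv_kdia θ φ))
    have h3 : Prv Ax a ((θ.dia).imp (ψ.box)) := prv_deduction h2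
    have hidb : Prv Ax a (((θ.dia).imp (ψ.box)).imp ((θ.imp ψ).box)) :=
      .ax (Or.inr (Or.inr (Or.inr ⟨IdbAx, hIdb,
        (fun n => if n = 0 then θ else ψ), rfl⟩)))
    have h4 : (θ.imp ψ).box ∈ a := ha _ (.mp h3 hidb)
    exact hc.1 _ (.mp (.el hθc) (.el (hbc _ h4)))
  obtain ⟨M, hM0, hM⟩ := zorn_subset_nonempty
    {T : Set Form | (a ∪ Form.dia '' c) ⊆ T ∧ ∀ ψ, Prv Ax T (ψ.box) → ψ ∈ c}
    (fun ch hcS hc' hne => by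
      refine ⟨⋃₀ ch, ⟨?_, ?_⟩, fun s hs => Set.subset_sUnion_of_mem hs⟩
      · obtain ⟨t, ht⟩ := hne
        exact (hcS ht).1.trans (Set.subset_sUnion_of_mem ht)
      · intro ψ hp
        obtain ⟨S, hSsub, hSfin, hSp⟩ := prv_finite hp
        obtain ⟨t, htc, hSt⟩ := chain_finite_subset hc' hne hSfin hSsub
        exact (hcS htc).2 ψ (prv_mono hSp hSt))
    (a ∪ Form.dia '' c) ⟨subset_rfl, hbase⟩
  obtain ⟨⟨hsub, hboxc⟩, hmax⟩ := hM
  have hkey : ∀ γ : Form, γ ∉ M → ∃ ψ, Prv Ax (insert γ M) (ψ.box) ∧ ψ ∉ c := by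
    intro γ hγ
    by_contra hp
    push_neg at hp
    have hmem : insert γ M ∈
        {T : Set Form | (a ∪ Form.dia '' c) ⊆ T ∧ ∀ ψ, Prv Ax T (ψ.box) → ψ ∈ c} :=
      ⟨hsub.trans (Set.subset_insert γ M), fun ψ h => hp ψ h⟩
    exact hγ (hmax hmem (Set.subset_insert γ M) (Set.mem_insert γ M))
  have hthy : IsTheory Ax M := by
    intro χ hχ
    by_contra hne
    obtain ⟨ψ, hψp, hψc⟩ := hkey χ hne
    refine hψc (hboxc ψ (prv_cut hψp (fun γ hγ => ?_)))
    rcases hγ with rfl | hγ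
    · exact hχ
    · exact .el hγ
  refine ⟨M, ⟨hthy, ?_⟩, (Set.subset_union_left).trans hsub,
    fun φ hφ => hsub (Set.mem_union_right _ ⟨φ, hφ, rfl⟩),
    fun θ hθ => hboxc θ (.el hθ)⟩
  intro α β hor
  by_contra hne
  push_neg at hne
  obtain ⟨hα, hβ⟩ := hne
  obtain ⟨ψa, hpa, hca⟩ := hkey α hα
  obtain ⟨ψb, hpb, hcb⟩ := hkey β hβ
  have boxmono : ∀ (Γ : Set Form) (φ1 φ2 : Form), Prv Ax ∅ (φ1.imp φ2) →
      Prv Ax Γ ((φ1.box).imp (φ2.box)) :=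
    fun Γ φ1 φ2 h => .mp (.nec h) (prv_kbox _ _)
  have h1 : Prv Ax (insert α M) ((ψa.or ψb).box) :=
    .mp hpa (boxmono _ _ _ (prv_a6 _ _))
  have h2 : Prv Ax (insert β M) ((ψa.or ψb).box) :=
    .mp hpb (boxmono _ _ _ (prv_a7 _ _))
  have h3 : Prv Ax M ((ψa.or ψb).box) := prv_or_elim (.el hor) h1 h2
  rcases hc.2 _ _ (hboxc _ h3) with h | h
  exacts [hca h, hcb h]

/-- A segment: a world of the canonical model. Its head is a prime theory
and its successor set realises all diamonds of the head. -/
structure Seg (Ax : Set Form) where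
  hd : Set Form
  sc : Set (Set Form)
  hd_prime : IsPrime Ax hd
  sc_prime : ∀ u ∈ sc, IsPrime Ax u
  sc_box : ∀ u ∈ sc, ∀ ψ : Form, ψ.box ∈ hd → ψ ∈ u
  sc_dia : ∀ χ : Form, χ.dia ∈ hd → ∃ u ∈ sc, χ ∈ u
  sc_set : ∀ g : Set Form, IsPrime Ax g → (∀ ψ ∈ g, ψ.dia ∈ hd) → ∃ u ∈ sc, g ⊆ u

theorem Seg.ext' {s t : Seg Ax} (h1 : s.hd = t.hd) (h2 : s.sc = t.sc) : s = t := by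
  cases s; cases t; simp_all

/-- The default segment on a prime theory: all primes above the boxes. -/
def segD (Ax : Set Form) (h : Set Form) (hp : IsPrime Ax h) : Seg Ax where
  hd := h
  sc := {u | IsPrime Ax u ∧ ∀ ψ : Form, ψ.box ∈ h → ψ ∈ u}
  hd_prime := hp
  sc_prime := fun u hu => hu.1
  sc_box := fun u hu => hu.2
  sc_dia := fun χ _ => ⟨Set.univ, ⟨univ_prime, fun _ _ => trivial⟩, trivial⟩
  sc_set := fun g _ _ => ⟨Set.univ, ⟨univ_prime, fun _ _ => trivial⟩, fun _ _ => trivial⟩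

/-- The exploding world of the canonical model. -/
def segE (Ax : Set Form) : Seg Ax := segD Ax Set.univ univ_prime

theorem seg_sc_univ {s : Seg Ax} (h : s.hd = Set.univ) : s.sc = {Set.univ} := by
  ext u
  simp only [Set.mem_singleton_iff]
  constructor
  · intro hu
    apply Set.eq_univ_of_forall
    intro ψ
    exact s.sc_box u hu ψ (by rw [h]; trivial)
  · rintro rfl
    obtain ⟨u, hu, hbu⟩ := s.sc_dia Form.bot (by rw [h]; trivial)
    rwa [theory_univ_of_bot (s.sc_prime u hu).1 hbu] at hu

theorem seg_eq_E {s : Seg Ax} (h : s.hd = Set.univ) : s = segE Ax := by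
  refine Seg.ext' h ?_
  rw [seg_sc_univ h, seg_sc_univ (s := segE Ax) rfl]

/-- The canonical frame. -/
def canF (Ax : Set Form) : CKFrame where
  W := Seg Ax
  le x y := x.hd ⊆ y.hd
  R x y := y.hd ∈ x.sc
  e := segE Ax
  le_refl _ := subset_rfl
  le_trans h1 h2 := h1.trans h2
  e_max h := seg_eq_E (Set.eq_univ_of_univ_subset h)
  e_R x := by
    constructor
    · intro h
      exact seg_eq_E (Set.eq_univ_of_forall fun ψ => h.2 ψ trivial)
    · rintro rfl
      exact ⟨univ_prime, fun ψ _ => trivial⟩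

/-- The canonical valuation. -/
def canV (Ax : Set Form) : Val (canF Ax) where
  V p w := (Form.var p) ∈ w.hd
  mono := by intro p x y h hx; exact h hx
  at_e _ := trivial

/-- The segment on a prime theory T that omits a from all successors
(possible whenever ◇a ∉ T). -/
def segAvoid (Ax : Set Form) (T : Set Form) (hT : IsPrime Ax T) (a : Form)
    (hna : a.dia ∉ T) : Seg Ax where
  hd := T
  sc := {u | IsPrime Ax u ∧ (∀ ψ : Form, ψ.box ∈ T → ψ ∈ u) ∧ a ∉ u}
  hd_prime := hT
  sc_prime := fun u hu => hu.1
  sc_box := fun u hu => hu.2.1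
  sc_dia := by
    intro χ hχ
    have hnp : ¬ Prv Ax (insert χ (bx T)) a := fun hp => hna (dia_closed hT.1 hp hχ)
    obtain ⟨u, h1, h2, h3⟩ := lindenbaum hnp
    exact ⟨u, ⟨h2, fun ψ hψ => h1 (Set.mem_insert_of_mem _ hψ), h3⟩,
      h1 (Set.mem_insert _ _)⟩
  sc_set := by
    intro g hg hgd
    have hnp : ¬ Prv Ax (g ∪ bx T) a := fun hp =>
      hna (dia_set_closed hT.1 hg.1 hgd hp)
    obtain ⟨u, h1, h2, h3⟩ := lindenbaum hnp
    exact ⟨u, ⟨h2, fun ψ hψ => h1 (Set.mem_union_right _ hψ), h3⟩,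
      fun ψ hψ => h1 (Set.mem_union_left _ hψ)⟩

/-- The truth lemma for the canonical model. -/
theorem truth : ∀ (φ : Form) (w : Seg Ax),
    Forces (canF Ax) (canV Ax) φ w ↔ φ ∈ w.hd := by
  intro φ
  induction φ with
  | var p => exact fun w => Iff.rfl
  | bot =>
      intro w
      show (w = (canF Ax).e) ↔ _
      constructor
      · rintro rfl; trivial
      · intro h; exact seg_eq_E (theory_univ_of_bot w.hd_prime.1 h)
  | and a b iha ihb =>
      intro w
      show (Forces (canF Ax) (canV Ax) a w ∧ Forces (canF Ax) (canV Ax) b w) ↔ _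
      rw [iha, ihb]
      constructor
      · rintro ⟨h1, h2⟩
        exact w.hd_prime.1 _ (prv_and_intro (.el h1) (.el h2))
      · intro h
        exact ⟨w.hd_prime.1 _ (.mp (.el h) (prv_a3 _ _)),
          w.hd_prime.1 _ (.mp (.el h) (prv_a4 _ _))⟩
  | or a b iha ihb =>
      intro w
      show (Forces (canF Ax) (canV Ax) a w ∨ Forces (canF Ax) (canV Ax) b w) ↔ _
      rw [iha, ihb]
      constructor
      · rintro (h | h)
        · exact w.hd_prime.1 _ (.mp (.el h) (prv_a6 _ _))
        · exact w.hd_prime.1 _ (.mp (.el h) (prv_a7 _ _))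
      · exact w.hd_prime.2 a b
  | imp a b iha ihb =>
      intro w
      show (∀ y : Seg Ax, w.hd ⊆ y.hd → Forces (canF Ax) (canV Ax) a y → Forces (canF Ax) (canV Ax) b y) ↔ _
      constructor
      · intro h
        by_contra hni
        have hnp : ¬ Prv Ax (insert a w.hd) b := fun hp =>
          hni (w.hd_prime.1 _ (prv_deduction hp))
        obtain ⟨T, hT1, hT2, hT3⟩ := lindenbaum hnp
        have hf := h (segD Ax T hT2) ((Set.subset_insert a w.hd).trans hT1)
          ((iha _).2 (hT1 (Set.mem_insert _ _)))
        exact hT3 ((ihb _).1 hf)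
      · intro h y hle hy
        exact (ihb y).2 (y.hd_prime.1 _ (.mp (.el ((iha y).1 hy)) (.el (hle h))))
  | box a ih =>
      intro w
      show (∀ y z : Seg Ax, w.hd ⊆ y.hd → z.hd ∈ y.sc → Forces (canF Ax) (canV Ax) a z) ↔ _
      constructor
      · intro h
        by_contra hni
        have hnp : ¬ Prv Ax (bx w.hd) a := fun hp =>
          hni (box_closed w.hd_prime.1 hp)
        obtain ⟨T, hT1, hT2, hT3⟩ := lindenbaum hnp
        have hz : (segD Ax T hT2).hd ∈ (segD Ax w.hd w.hd_prime).sc :=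
          ⟨hT2, fun ψ hψ => hT1 hψ⟩
        exact hT3 ((ih _).1 (h (segD Ax w.hd w.hd_prime) (segD Ax T hT2)
          subset_rfl hz))
      · intro h y z hle hR
        exact (ih z).2 (y.sc_box _ hR a (hle h))
  | dia a ih =>
      intro w
      show (∀ y : Seg Ax, w.hd ⊆ y.hd → ∃ z : Seg Ax, z.hd ∈ y.sc ∧ Forces (canF Ax) (canV Ax) a z) ↔ _
      constructor
      · intro h
        by_contra hni
        have hnp : ¬ Prv Ax w.hd (a.dia) := fun hp => hni (w.hd_prime.1 _ hp)
        obtain ⟨T, hT1, hT2, hT3⟩ := lindenbaum hnp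
        obtain ⟨z, hz, hza⟩ := h (segAvoid Ax T hT2 a hT3) hT1
        exact hz.2.2 ((ih z).1 hza)
      · intro h y hle
        obtain ⟨u, hu, hau⟩ := y.sc_dia a (hle h)
        exact ⟨segD Ax u (y.sc_prime u hu), hu, (ih _).2 hau⟩

theorem canF_nd (hNd : NdAx ∈ Ax) : NdCorr (canF Ax) := by
  intro w h
  by_contra hne
  have hbot : Form.bot ∉ w.hd := fun hb =>
    hne (seg_eq_E (theory_univ_of_bot w.hd_prime.1 hb))
  have hdia : Form.bot.dia ∉ w.hd := by
    intro hd
    have hnd : Prv Ax w.hd ((Form.bot.dia).imp Form.bot) :=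
      .ax (Or.inr (Or.inr (Or.inr ⟨NdAx, hNd, Form.var, rfl⟩)))
    exact hbot (w.hd_prime.1 _ (.mp (.el hd) hnd))
  have hnp : ¬ Prv Ax w.hd (Form.bot.dia) := fun hp => hdia (w.hd_prime.1 _ hp)
  obtain ⟨T, hT1, hT2, hT3⟩ := lindenbaum hnp
  exact (h (segAvoid Ax T hT2 Form.bot hT3) hT1).2.2 trivial

/-- The maximal segment on a prime theory: available when C_◇ ∈ Ax. -/
def segMax (hCd : CdAx ∈ Ax) (h : Set Form) (hp : IsPrime Ax h) : Seg Ax where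
  hd := h
  sc := {u | IsPrime Ax u ∧ (∀ ψ : Form, ψ.box ∈ h → ψ ∈ u) ∧ ∀ ψ ∈ u, ψ.dia ∈ h}
  hd_prime := hp
  sc_prime := fun u hu => hu.1
  sc_box := fun u hu => hu.2.1
  sc_dia := by
    intro χ hχ
    have H : ∀ γ, Prv Ax (insert χ (bx h)) γ → γ.dia ∈ h :=
      fun γ hp' => dia_closed hp.1 hp' hχ
    obtain ⟨u, hu1, hu2, hu3⟩ := lemmaB hCd hp H
    exact ⟨u, ⟨hu1, fun ψ hψ => hu2 (Set.mem_insert_of_mem _ hψ), hu3⟩,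
      hu2 (Set.mem_insert _ _)⟩
  sc_set := by
    intro g hg hgd
    have H : ∀ γ, Prv Ax (g ∪ bx h) γ → γ.dia ∈ h :=
      fun γ hp' => dia_set_closed hp.1 hg.1 hgd hp'
    obtain ⟨u, hu1, hu2, hu3⟩ := lemmaB hCd hp H
    exact ⟨u, ⟨hu1, fun ψ hψ => hu2 (Set.mem_union_right _ hψ), hu3⟩,
      fun ψ hψ => hu2 (Set.mem_union_left _ hψ)⟩

theorem canF_cd (hCd : CdAx ∈ Ax) : CdCorr (canF Ax) := by
  intro x y z _ _ hxy hxz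
  refine ⟨segMax hCd x.hd x.hd_prime, subset_rfl, ?_, ?_⟩
  · intro v hv
    obtain ⟨u', hu', hsub⟩ := y.sc_set v.hd hv.1 (fun ψ hψ => hxy (hv.2.2 ψ hψ))
    exact ⟨segD Ax u' (y.sc_prime u' hu'), hu', hsub⟩
  · intro v hv
    obtain ⟨u', hu', hsub⟩ := z.sc_set v.hd hv.1 (fun ψ hψ => hxz (hv.2.2 ψ hψ))
    exact ⟨segD Ax u' (z.sc_prime u' hu'), hu', hsub⟩

theorem canF_idb (hIdb : IdbAx ∈ Ax) : IdbCorr (canF Ax) := by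
  intro x y z hxy hyz _
  have hbc : ∀ θ : Form, θ.box ∈ x.hd → θ ∈ z.hd :=
    fun θ h => hyz (x.sc_box y.hd hxy θ h)
  obtain ⟨a', ha'p, ha'sub, ha'dia, ha'box⟩ := idb_ext hIdb x.hd_prime.1 z.hd_prime hbc
  refine ⟨segD Ax a' ha'p, z, ha'sub, ⟨z.hd_prime, fun ψ hψ => ha'box ψ hψ⟩,
    subset_rfl, ?_⟩
  intro s hs
  right
  obtain ⟨t', ht', hsub⟩ := s.sc_set z.hd z.hd_prime (fun ψ hψ => hs (ha'dia ψ hψ))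
  exact ⟨segD Ax t' (s.sc_prime t' ht'), ht', hsub⟩

/-! #### Soundness -/

theorem forces_mono {F : CKFrame} {V : Val F} : ∀ (φ : Form) {x y : F.W},
    F.le x y → Forces F V φ x → Forces F V φ y := by
  intro φ
  induction φ with
  | var p => exact fun h hx => V.mono p h hx
  | bot =>
      intro x y h hx
      have hx' : x = F.e := hx
      subst hx'
      exact F.e_max h
  | and a b iha ihb => exact fun h hx => ⟨iha h hx.1, ihb h hx.2⟩
  | or a b iha ihb =>
      intro x y h hx
      rcases hx with hx | hx
      · exact Or.inl (iha h hx)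
      · exact Or.inr (ihb h hx)
  | imp a b iha ihb =>
      intro x y h hx z hz haz
      exact hx z (F.le_trans h hz) haz
  | box a ih =>
      intro x y h hx y' z hy' hR
      exact hx y' z (F.le_trans h hy') hR
  | dia a ih =>
      intro x y h hx y' hy'
      exact hx y' (F.le_trans h hy')

theorem forces_e {F : CKFrame} {V : Val F} : ∀ φ : Form, Forces F V φ F.e := by
  intro φ
  induction φ with
  | var p => exact V.at_e p
  | bot => rfl
  | and a b iha ihb => exact ⟨iha, ihb⟩
  | or a b iha ihb => exact Or.inl iha
  | imp a b iha ihb =>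
      intro y hy hay
      have : y = F.e := F.e_max hy
      subst this
      exact ihb
  | box a ih =>
      intro y z hy hR
      have hy' : y = F.e := F.e_max hy
      subst hy'
      have hz : z = F.e := (F.e_R z).1 hR
      subst hz
      exact ih
  | dia a ih =>
      intro y hy
      have : y = F.e := F.e_max hy
      subst this
      exact ⟨F.e, (F.e_R F.e).2 rfl, ih⟩

theorem valid_ipl {F : CKFrame} {φ : Form} (h : IPLAx φ) (V : Val F) (x : F.W) :
    Forces F V φ x := by
  induction h with
  | a1 φ ψ =>
      intro y _ hφ y' hy' _
      exact forces_mono φ hy' hφ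
  | a2 φ ψ χ =>
      intro y _ h1 y' hy' h2 y'' hy'' h3
      exact h1 y'' (F.le_trans hy' hy'') h3 y'' (F.le_refl y'') (h2 y'' hy'' h3)
  | a3 φ ψ => exact fun y _ h1 => h1.1
  | a4 φ ψ => exact fun y _ h1 => h1.2
  | a5 φ ψ =>
      intro y _ h1 y' hy' h2
      exact ⟨forces_mono φ hy' h1, h2⟩
  | a6 φ ψ => exact fun y _ h1 => Or.inl h1
  | a7 φ ψ => exact fun y _ h1 => Or.inr h1
  | a8 φ ψ χ =>
      intro y _ h1 y' hy' h2 y'' hy'' h3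
      rcases h3 with h3 | h3
      · exact h1 y'' (F.le_trans hy' hy'') h3
      · exact h2 y'' hy'' h3
  | a9 φ =>
      intro y _ h1
      have h1' : y = F.e := h1
      rw [h1']
      exact forces_e φ

theorem valid_kbox {F : CKFrame} (φ ψ : Form) (V : Val F) (x : F.W) :
    Forces F V (((φ.imp ψ).box).imp ((φ.box).imp (ψ.box))) x := by
  intro y _ h1 y' hy' h2 y'' z hy'' hR
  exact h1 y'' z (F.le_trans hy' hy'') hR z (F.le_refl z) (h2 y'' z hy'' hR)

theorem valid_kdia {F : CKFrame} (φ ψ : Form) (V : Val F) (x : F.W) :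
    Forces F V (((φ.imp ψ).box).imp ((φ.dia).imp (ψ.dia))) x := by
  intro y _ h1 y' hy' h2 y'' hy''
  obtain ⟨z, hR, hφ⟩ := h2 y'' hy''
  exact ⟨z, hR, h1 y'' z (F.le_trans hy' hy'') hR z (F.le_refl z) hφ⟩

theorem valid_nd {F : CKFrame} (hc : NdCorr F) (V : Val F) (x : F.W) :
    Forces F V ((Form.bot.dia).imp Form.bot) x := by
  intro y _ h1
  show y = F.e
  refine hc y (fun y' hy' => ?_)
  obtain ⟨z, hR, hz⟩ := h1 y' hy'
  have hz' : z = F.e := hz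
  rwa [hz'] at hR

theorem valid_cd {F : CKFrame} (hc : CdCorr F) (φ ψ : Form) (V : Val F) (x : F.W) :
    Forces F V (((φ.or ψ).dia).imp ((φ.dia).or (ψ.dia))) x := by
  intro y _ h1
  show Forces F V (φ.dia) y ∨ Forces F V (ψ.dia) y
  by_contra hn
  push_neg at hn
  obtain ⟨hnφ, hnψ⟩ := hn
  have hφ' : ∃ y1, F.le y y1 ∧ ∀ z, F.R y1 z → ¬ Forces F V φ z := by
    by_contra h'
    push_neg at h'
    exact hnφ (fun y1 hy1 => h' y1 hy1)
  have hψ' : ∃ y2, F.le y y2 ∧ ∀ z, F.R y2 z → ¬ Forces F V ψ z := by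
    by_contra h'
    push_neg at h'
    exact hnψ (fun y2 hy2 => h' y2 hy2)
  obtain ⟨y1, hy1, hz1⟩ := hφ'
  obtain ⟨y2, hy2, hz2⟩ := hψ'
  have hn1 : ¬ F.R y1 F.e := fun hR => hz1 F.e hR (forces_e φ)
  have hn2 : ¬ F.R y2 F.e := fun hR => hz2 F.e hR (forces_e ψ)
  obtain ⟨w, hyw, H1, H2⟩ := hc y y1 y2 hn1 hn2 hy1 hy2
  obtain ⟨v, hRv, hor⟩ := h1 w hyw
  rcases hor with hv | hv
  · obtain ⟨u, hRu, hvu⟩ := H1 v hRv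
    exact hz1 u hRu (forces_mono φ hvu hv)
  · obtain ⟨u, hRu, hvu⟩ := H2 v hRv
    exact hz2 u hRu (forces_mono ψ hvu hv)

theorem valid_idb {F : CKFrame} (hc : IdbCorr F) (φ ψ : Form) (V : Val F) (x : F.W) :
    Forces F V (((φ.dia).imp (ψ.box)).imp ((φ.imp ψ).box)) x := by
  intro y hy h1 y' z hy' hR y'' hz'' hφ
  by_cases he : y'' = F.e
  · rw [he]; exact forces_e ψ
  · obtain ⟨u, w, hy'u, hRuw, hwz, hall⟩ := hc y' z y'' hR hz'' he
    have hudia : Forces F V (φ.dia) u := by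
      intro s hs
      rcases hall s hs with hse | ⟨t, hst, hzt⟩
      · exact ⟨F.e, hse, forces_e φ⟩
      · exact ⟨t, hst, forces_mono φ hzt hφ⟩
    have hbox : Forces F V (ψ.box) u := h1 u (F.le_trans hy' hy'u) hudia
    exact forces_mono ψ hwz (hbox u w (F.le_refl u) hRuw)

theorem sound {Γ : Set Form} {φ : Form} (hAx : Ax ⊆ {NdAx, CdAx, IdbAx})
    (h : Prv Ax Γ φ) (F : CKFrame) (hNd : NdAx ∈ Ax → NdCorr F)
    (hCd : CdAx ∈ Ax → CdCorr F) (hIdb : IdbAx ∈ Ax → IdbCorr F) :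
    ValidConseq F Γ φ := by
  induction h with
  | ax hax =>
      intro V x _
      rcases hax with hipl | hkb | hkd | ⟨ψ, hψAx, σ, rfl⟩
      · exact valid_ipl hipl V x
      · obtain ⟨a, b, rfl⟩ := hkb
        exact valid_kbox a b V x
      · obtain ⟨a, b, rfl⟩ := hkd
        exact valid_kdia a b V x
      · have hmem := hAx hψAx
        simp only [Set.mem_insert_iff, Set.mem_singleton_iff] at hmem
        rcases hmem with rfl | rfl | rfl
        · exact valid_nd (hNd hψAx) V x
        · exact valid_cd (hCd hψAx) (σ 0) (σ 1) V x
        · exact valid_idb (hIdb hψAx) (σ 0) (σ 1) V x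
  | mp h1 h2 ih1 ih2 =>
      intro V x hx
      exact ih2 V x hx x (F.le_refl x) (ih1 V x hx)
  | nec h ih =>
      intro V x _ y z hy hR
      exact ih V z (fun ψ hψ => absurd hψ (Set.notMem_empty ψ))
  | el h => exact fun V x hx => hx _ h

end CKAux

/-- Soundness and strong completeness w.r.t. correspondence conditions: for
Ax ⊆ {N_◇, C_◇, I_◇□} and 𝓕 the class of CK-frames satisfying (A-corr) for
each A ∈ Ax, semantic entailment on 𝓕 coincides with derivability in CK ⊕ Ax. -/
theorem corr_sound_strong_complete (Ax : Set Form)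
    (hAx : Ax ⊆ {NdAx, CdAx, IdbAx}) (𝓕 : Set CKFrame)
    (h𝓕 : 𝓕 = {F : CKFrame |
      (NdAx ∈ Ax → NdCorr F) ∧ (CdAx ∈ Ax → CdCorr F) ∧ (IdbAx ∈ Ax → IdbCorr F)})
    (Γ : Set Form) (φ : Form) :
    SemEntails 𝓕 Γ φ ↔ Prv Ax Γ φ := by
  classical
  constructor
  · intro hsem
    by_contra hnp
    obtain ⟨T, hT1, hT2, hT3⟩ := CKAux.lindenbaum hnp
    have hF : CKAux.canF Ax ∈ 𝓕 := by
      rw [h𝓕]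
      exact ⟨fun h => CKAux.canF_nd h, fun h => CKAux.canF_cd h,
        fun h => CKAux.canF_idb h⟩
    have hforce := hsem (CKAux.canF Ax) hF (CKAux.canV Ax) (CKAux.segD Ax T hT2)
      (fun ψ hψ => (CKAux.truth ψ _).2 (hT1 hψ))
    exact hT3 ((CKAux.truth φ _).1 hforce)
  · intro hp F hF
    rw [h𝓕] at hF
    exact CKAux.sound hAx hp F hF.1 hF.2.1 hF.2.2
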